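/- Let a < b be real numbers, D = [a,b] with its subspace topology, and let R be the ℝ-subalgebra of the product ring (D → ℝ) consisting of all bounded functions f : D → ℝ whose set of discontinuity points is finite. Then f ∈ R is a unit of R if and only if there exists ε > 0 such that |f(x)| ≥ ε for all x ∈ D. -/

import Mathlib

open Set Filter Topology

/-- The ℝ-subalgebra of the product ring `W → ℝ` consisting of all bounded
functions with finitely many discontinuity points. -/
def pcAlg (W : Type*) [TopologicalSpace W] : Subalgebra ℝ (W → ℝ) where
  carrier := {f | (∃ C, ∀ x, |f x| ≤ C) ∧ {x | ¬ ContinuousAt f x}.Finite}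
  add_mem' := by
    rintro f g ⟨⟨Cf, hCf⟩, hf⟩ ⟨⟨Cg, hCg⟩, hg⟩
    refine ⟨⟨Cf + Cg, fun x => ?_⟩, (hf.union hg).subset fun x hx => ?_⟩
    · exact (abs_add_le _ _).trans (add_le_add (hCf x) (hCg x))
    · simp only [mem_union, mem_setOf_eq] at hx ⊢
      by_contra h
      push_neg at h
      exact hx (h.1.add h.2)
  mul_mem' := by
    rintro f g ⟨⟨Cf, hCf⟩, hf⟩ ⟨⟨Cg, hCg⟩, hg⟩
    refine ⟨⟨max Cf 0 * max Cg 0, fun x => ?_⟩, (hf.union hg).subset fun x hx => ?_⟩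
    · rw [Pi.mul_apply, abs_mul]
      exact mul_le_mul ((hCf x).trans (le_max_left _ _)) ((hCg x).trans (le_max_left _ _))
        (abs_nonneg _) (le_max_right _ _)
    · simp only [mem_union, mem_setOf_eq] at hx ⊢
      by_contra h
      push_neg at h
      exact hx (h.1.mul h.2)
  algebraMap_mem' := fun r => by
    refine ⟨⟨|r|, fun x => le_of_eq rfl⟩, Set.finite_empty.subset fun x hx => ?_⟩
    exact absurd continuousAt_const hx

/-- In `R = C⁰_{b,D,<∞}(D)` for `D = [a,b]`, an element is a unit if and only if it
is bounded away from `0`. -/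
theorem pcAlg_isUnit_iff (a b : ℝ) (hab : a < b)
    (f : ↥(pcAlg ↥(Set.Icc a b))) :
    IsUnit f ↔ ∃ ε > (0 : ℝ), ∀ x : ↥(Set.Icc a b), ε ≤ |f.1 x| := by
  constructor
  · rintro ⟨⟨u, v, huv, hvu⟩, rfl⟩
    obtain ⟨⟨C, hC⟩, -⟩ := v.2
    have hfv : ∀ x, u.1 x * v.1 x = 1 := fun x =>
      congrFun (congrArg Subtype.val huv) x
    have hCpos : 0 < C := by
      have hx : (⟨a, by constructor <;> [rfl; exact hab.le]⟩ : ↥(Set.Icc a b)) ∈ Set.univ :=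
        trivial
      set x : ↥(Set.Icc a b) := ⟨a, by constructor <;> [rfl; exact hab.le]⟩
      have h1 : v.1 x ≠ 0 := by
        intro h0
        have := hfv x
        rw [h0, mul_zero] at this
        exact one_ne_zero this.symm
      exact lt_of_lt_of_le (abs_pos.mpr h1) (hC x)
    refine ⟨C⁻¹, inv_pos.mpr hCpos, fun x => ?_⟩
    have h1 : |u.1 x| * |v.1 x| = 1 := by rw [← abs_mul, hfv x, abs_one]
    have h2 : |v.1 x| ≠ 0 := fun h => by rw [h, mul_zero] at h1; exact one_ne_zero h1.symm
    have hv0 : (0:ℝ) < |v.1 x| := (abs_nonneg _).lt_of_ne (Ne.symm h2)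
    show C⁻¹ ≤ |u.1 x|
    have hux : |u.1 x| = |v.1 x|⁻¹ := eq_inv_of_mul_eq_one_left h1
    rw [hux]
    exact inv_anti₀ hv0 (hC x)
  · rintro ⟨ε, hε, hεf⟩
    have hne : ∀ x, f.1 x ≠ 0 := fun x h => by
      have := hεf x; rw [h, abs_zero] at this; linarith
    have hg : (fun x => (f.1 x)⁻¹) ∈ pcAlg ↥(Set.Icc a b) := by
      obtain ⟨-, hfin⟩ := f.2
      refine ⟨⟨ε⁻¹, fun x => ?_⟩, hfin.subset fun x hx => ?_⟩
      · rw [abs_inv]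
        exact inv_anti₀ hε (hεf x)
      · simp only [Set.mem_setOf_eq] at hx ⊢
        intro hc
        exact hx ((hc.inv₀ (hne x)))
    refine ⟨⟨f, ⟨_, hg⟩, ?_, ?_⟩, rfl⟩
    · exact Subtype.ext (funext fun x => mul_inv_cancel₀ (hne x))
    · exact Subtype.ext (funext fun x => inv_mul_cancel₀ (hne x))
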